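/- Let δ, η be nonzero complex numbers, and let a ≥ 1 and c ≥ 1 be integers. Set x = δ + δ⁻¹, y = η + η⁻¹, z = δη + δ⁻¹η⁻¹. Then δᵃηᶜ + δ⁻ᵃη⁻ᶜ = 2·T_a(x/2)·T_c(y/2) + (1/2)·U_{a−1}(x/2)·U_{c−1}(y/2)·(2z − xy), where T_n and U_n denote the Chebyshev polynomials of the first and second kinds. (This is the key identity giving the polynomials p_{a,c}(x,y) = 2T_a(x/2)T_c(y/2) − (xy/2)U_{a−1}(x/2)U_{c−1}(y/2) and q_{a,c}(x,y) = U_{a−1}(x/2)U_{c−1}(y/2) expressing the GL₂(ℤ)-action on the Cayley cubic.) -/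
import Mathlib

open Polynomial Polynomial.Chebyshev

private lemma zp_up (δ : ℂ) (hδ : δ ≠ 0) {m k : ℤ} (h : m = k + 1) :
    δ ^ m = δ ^ k * δ := by subst h; rw [zpow_add_one₀ hδ]

private lemma zp_dn (δ : ℂ) (hδ : δ ≠ 0) {m k : ℤ} (h : m = k - 1) :
    δ ^ m = δ ^ k * δ⁻¹ := by
  subst h; rw [sub_eq_add_neg, zpow_add₀ hδ, zpow_neg_one]

private lemma T_half_inv (δ : ℂ) (hδ : δ ≠ 0) (n : ℤ) :
    2 * (Chebyshev.T ℂ n).eval ((δ + δ⁻¹) / 2) = δ ^ n + δ ^ (-n) := by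
  induction n using Polynomial.Chebyshev.induct with
  | zero => norm_num
  | one =>
      simp only [Chebyshev.T_one, eval_X, zpow_one, zpow_neg_one]
      ring
  | add_two n h1 h2 =>
      rw [Chebyshev.T_add_two]
      simp only [eval_sub, eval_mul, eval_ofNat, eval_X]
      rw [zp_up δ hδ (show (n:ℤ)+2 = ((n:ℤ)+1)+1 by ring),
          zp_dn δ hδ (show -((n:ℤ)+2) = -((n:ℤ)+1)-1 by ring)]
      rw [zp_dn δ hδ (show (n:ℤ) = ((n:ℤ)+1)-1 by ring),
          zp_up δ hδ (show -(n:ℤ) = -((n:ℤ)+1)+1 by ring)] at h2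
      linear_combination (δ + δ⁻¹) * h1 - h2
  | neg_add_one n h1 h2 =>
      rw [show (-(n:ℤ) - 1) = (-(n:ℤ)) - 1 by ring, Chebyshev.T_sub_one]
      simp only [eval_sub, eval_mul, eval_ofNat, eval_X]
      rw [zp_dn δ hδ (show -(n:ℤ)-1 = -(n:ℤ)-1 by ring),
          zp_up δ hδ (show -(-(n:ℤ)-1) = (n:ℤ)+1 by ring)]
      rw [show -(-(n:ℤ)) = (n:ℤ) by ring] at h1
      rw [zp_up δ hδ (show -(n:ℤ)+1 = -(n:ℤ)+1 by ring),
          zp_dn δ hδ (show -(-(n:ℤ)+1) = (n:ℤ)-1 by ring)] at h2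
      linear_combination (δ + δ⁻¹) * h1 - h2

private lemma U_half_inv (δ : ℂ) (hδ : δ ≠ 0) (n : ℤ) :
    (δ - δ⁻¹) * (Chebyshev.U ℂ n).eval ((δ + δ⁻¹) / 2) = δ ^ (n + 1) - δ ^ (-(n + 1)) := by
  induction n using Polynomial.Chebyshev.induct with
  | zero =>
      simp only [Chebyshev.U_zero, eval_one, mul_one, zero_add, zpow_one, zpow_neg_one]
  | one =>
      simp only [Chebyshev.U_one, eval_mul, eval_ofNat, eval_X]
      rw [zp_up δ hδ (show (1:ℤ)+1 = 1+1 by ring), zpow_one,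
          zp_dn δ hδ (show -((1:ℤ)+1) = -1-1 by ring), zpow_neg_one]
      ring
  | add_two n h1 h2 =>
      rw [Chebyshev.U_add_two]
      simp only [eval_sub, eval_mul, eval_ofNat, eval_X]
      rw [zp_up δ hδ (show (n:ℤ)+2+1 = ((n:ℤ)+1+1)+1 by ring),
          zp_dn δ hδ (show -((n:ℤ)+2+1) = -((n:ℤ)+1+1)-1 by ring)]
      rw [zp_dn δ hδ (show (n:ℤ)+1 = ((n:ℤ)+1+1)-1 by ring),
          zp_up δ hδ (show -((n:ℤ)+1) = -((n:ℤ)+1+1)+1 by ring)] at h2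
      linear_combination (δ + δ⁻¹) * h1 - h2
  | neg_add_one n h1 h2 =>
      rw [show (-(n:ℤ) - 1) = (-(n:ℤ)) - 1 by ring, Chebyshev.U_sub_one]
      simp only [eval_sub, eval_mul, eval_ofNat, eval_X]
      rw [zp_dn δ hδ (show -(n:ℤ)-1+1 = (-(n:ℤ)+1)-1 by ring),
          zp_up δ hδ (show -(-(n:ℤ)-1+1) = (-(-(n:ℤ)+1))+1 by ring)]
      rw [zp_up δ hδ (show -(n:ℤ)+1+1 = (-(n:ℤ)+1)+1 by ring),
          zp_dn δ hδ (show -(-(n:ℤ)+1+1) = (-(-(n:ℤ)+1))-1 by ring)] at h2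
      linear_combination (δ + δ⁻¹) * h1 - h2

/-- For nonzero complex `δ, η` and integers `a, c ≥ 1`, with
`x = δ + δ⁻¹`, `y = η + η⁻¹`, `z = δη + δ⁻¹η⁻¹`, one has
`δᵃηᶜ + δ⁻ᵃη⁻ᶜ = 2 Tₐ(x/2) T_c(y/2) + ½ U_{a−1}(x/2) U_{c−1}(y/2) (2z − xy)`,
where `T` and `U` are the Chebyshev polynomials of the first and second kinds. -/
theorem chebyshev_action_identity (δ η : ℂ) (hδ : δ ≠ 0) (hη : η ≠ 0)
    (a c : ℤ) (ha : 1 ≤ a) (hc : 1 ≤ c) :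
    δ ^ a * η ^ c + δ ^ (-a) * η ^ (-c) =
      2 * (Chebyshev.T ℂ a).eval ((δ + δ⁻¹) / 2) *
          (Chebyshev.T ℂ c).eval ((η + η⁻¹) / 2) +
        1 / 2 * (Chebyshev.U ℂ (a - 1)).eval ((δ + δ⁻¹) / 2) *
          (Chebyshev.U ℂ (c - 1)).eval ((η + η⁻¹) / 2) *
          (2 * (δ * η + δ⁻¹ * η⁻¹) - (δ + δ⁻¹) * (η + η⁻¹)) := by
  have hT1 := T_half_inv δ hδ a
  have hT2 := T_half_inv η hη c
  have hU1 := U_half_inv δ hδ (a - 1)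
  have hU2 := U_half_inv η hη (c - 1)
  rw [show a - 1 + 1 = a by ring] at hU1
  rw [show c - 1 + 1 = c by ring] at hU2
  have key : 2 * (δ * η + δ⁻¹ * η⁻¹) - (δ + δ⁻¹) * (η + η⁻¹)
      = (δ - δ⁻¹) * (η - η⁻¹) := by
    have h1 : δ * δ⁻¹ = 1 := mul_inv_cancel₀ hδ
    have h2 : η * η⁻¹ = 1 := mul_inv_cancel₀ hη
    field_simp
    ring
  rw [key]
  linear_combination -(1/2) * ((η ^ c + η ^ (-c)) * hT1 + 2 * (Chebyshev.T ℂ a).eval ((δ + δ⁻¹)/2) * hT2)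
    - (1/2) * ((η ^ c - η ^ (-c)) * hU1 + (δ - δ⁻¹) * (Chebyshev.U ℂ (a-1)).eval ((δ + δ⁻¹)/2) * hU2)
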